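/- Let 0 < ξ < 1/2 and ν > 0 with ν + ξ > 1 (hence 2ν − 1 > 0). Then there exists a constant C, depending only on ξ and ν, such that for every integer n ≥ 2, taking m = ⌈n^{1/(2ν−1)}⌉, one has (1/n) Σ_{i=1}^m i^{−2ξ} + ( Σ_{i=m+1}^∞ i^{−(ν+ξ)} )² ≤ C · n^{−1 + (1−2ξ)/(2ν−1)}. -/

import Mathlib

open Real

lemma le_inv_of_mul_le {a c : ℝ} (hc : 0 < c) (h : c * a ≤ 1) : a ≤ c⁻¹ := by
  have := (le_inv_mul_iff₀ hc (b := 1)).2 (by simpa using h)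
  simpa using this

/-- Head sum bound: for `0 < s < 1`, `∑_{i=1}^m i^{-s} ≤ m^{1-s}/(1-s)`. -/
lemma head_sum_le (s : ℝ) (hs0 : 0 < s) (hs1 : s < 1) (m : ℕ) :
    ∑ i ∈ Finset.Icc 1 m, (i : ℝ) ^ (-s) ≤ (m : ℝ) ^ (1 - s) / (1 - s) := by
  induction m with
  | zero =>
      simp [Real.zero_rpow (by linarith : (1 : ℝ) - s ≠ 0)]
  | succ m ih =>
      rw [Finset.sum_Icc_succ_top (by omega : 1 ≤ m + 1)]
      have hb : (0 : ℝ) < (m : ℝ) + 1 := by positivity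
      set b : ℝ := (m : ℝ) + 1 with hbdef
      have ht1 : 1 / b ≤ 1 := by
        rw [div_le_one hb]; linarith [Nat.cast_nonneg (α := ℝ) m]
      -- key: m^{1-s} ≤ b^{1-s} - (1-s) * b^{-s}
      have key : (m : ℝ) ^ (1 - s) ≤ b ^ (1 - s) - (1 - s) * b ^ (-s) := by
        have hmb : (m : ℝ) = b * (1 - 1 / b) := by
          rw [hbdef]; field_simp; ring
        have hbern : (1 - 1 / b) ^ (1 - s) ≤ 1 - (1 - s) * (1 / b) := by
          have := rpow_one_add_le_one_add_mul_self
            (s := -(1 / b)) (by linarith) (p := 1 - s) (by linarith) (by linarith)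
          simpa [sub_eq_add_neg, mul_neg] using this
        have h1b : (0 : ℝ) ≤ 1 - 1 / b := by linarith
        calc (m : ℝ) ^ (1 - s) = b ^ (1 - s) * (1 - 1 / b) ^ (1 - s) := by
              rw [hmb, Real.mul_rpow hb.le h1b]
          _ ≤ b ^ (1 - s) * (1 - (1 - s) * (1 / b)) := by
              apply mul_le_mul_of_nonneg_left hbern (Real.rpow_nonneg hb.le _)
          _ = b ^ (1 - s) - (1 - s) * (b ^ (1 - s) * b⁻¹) := by ring
          _ = b ^ (1 - s) - (1 - s) * b ^ (-s) := by
              rw [← Real.rpow_neg_one b, ← Real.rpow_add hb]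
              ring_nf
      have hstep : (m : ℝ) ^ (1 - s) / (1 - s) + b ^ (-s)
          ≤ b ^ (1 - s) / (1 - s) := by
        rw [div_add' _ _ _ (by linarith : (1:ℝ) - s ≠ 0), div_le_div_iff_of_pos_right (by linarith)]
        linarith
      calc ∑ i ∈ Finset.Icc 1 m, (i : ℝ) ^ (-s) + ((m : ℕ) + 1 : ℕ) ^ (-s)
          ≤ (m : ℝ) ^ (1 - s) / (1 - s) + b ^ (-s) := by
            push_cast
            exact add_le_add_left ih _
        _ ≤ b ^ (1 - s) / (1 - s) := hstep
        _ = ((m + 1 : ℕ) : ℝ) ^ (1 - s) / (1 - s) := by push_cast; rfl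

/-- One-step tail estimate: for `s > 1` and `b ≥ 2`,
`(s-1) * b^{-s} ≤ (b-1)^{1-s} - b^{1-s}`. -/
lemma tail_step (s : ℝ) (hs : 1 < s) (b : ℝ) (hb : 2 ≤ b) :
    (s - 1) * b ^ (-s) ≤ (b - 1) ^ (1 - s) - b ^ (1 - s) := by
  have hb0 : (0 : ℝ) < b := by linarith
  have hb1 : (0 : ℝ) < b - 1 := by linarith
  have ht : 0 < 1 / b := by positivity
  have ht2 : 1 / b ≤ 1 / 2 := by
    apply div_le_div_of_nonneg_left (by norm_num) (by norm_num) hb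
  -- main: (1 - 1/b)^{1-s} ≥ 1 + (s-1)*(1/b)
  have hmain : 1 + (s - 1) * (1 / b) ≤ (1 - 1 / b) ^ (1 - s) := by
    set t : ℝ := 1 / b with htdef
    have h1t : (0 : ℝ) < 1 - t := by linarith
    have hrw : (1 - t) ^ (1 - s) = ((1 - t) ^ (s - 1))⁻¹ := by
      rw [show (1 : ℝ) - s = -(s - 1) by ring, Real.rpow_neg h1t.le]
    rcases le_or_gt 2 s with hs2 | hs2
    · -- s ≥ 2 : use lower Bernoulli on (1/(1-t))^{s-1} ≥ (1+t)^{s-1} ≥ 1+(s-1)t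
      have hinv : 1 + t ≤ (1 - t)⁻¹ := le_inv_of_mul_le h1t (by nlinarith)
      have h1 : (1 + t) ^ (s - 1) ≤ ((1 - t)⁻¹) ^ (s - 1) :=
        Real.rpow_le_rpow (by linarith) hinv (by linarith)
      have h2 : 1 + (s - 1) * t ≤ (1 + t) ^ (s - 1) :=
        one_add_mul_self_le_rpow_one_add (by linarith) (by linarith)
      have h3 : ((1 - t)⁻¹) ^ (s - 1) = ((1 - t) ^ (s - 1))⁻¹ :=
        Real.inv_rpow h1t.le _
      rw [hrw]
      calc 1 + (s - 1) * t ≤ (1 + t) ^ (s - 1) := h2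
        _ ≤ ((1 - t)⁻¹) ^ (s - 1) := h1
        _ = ((1 - t) ^ (s - 1))⁻¹ := h3
    · -- 1 < s < 2 : upper Bernoulli gives (1-t)^{s-1} ≤ 1-(s-1)t, then invert
      have hbern : (1 - t) ^ (s - 1) ≤ 1 - (s - 1) * t := by
        have := rpow_one_add_le_one_add_mul_self
          (s := -t) (by linarith) (p := s - 1) (by linarith) (by linarith)
        simpa [sub_eq_add_neg, mul_neg] using this
      have hpos : (0 : ℝ) < 1 - (s - 1) * t := by nlinarith
      have hpos2 : (0 : ℝ) < (1 - t) ^ (s - 1) := Real.rpow_pos_of_pos h1t _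
      rw [hrw]
      have hinv1 : (1 - (s - 1) * t)⁻¹ ≤ ((1 - t) ^ (s - 1))⁻¹ :=
        inv_anti₀ hpos2 hbern
      have hinv2 : 1 + (s - 1) * t ≤ (1 - (s - 1) * t)⁻¹ :=
        le_inv_of_mul_le hpos (by nlinarith [sq_nonneg ((s - 1) * t)])
      linarith
  -- assemble
  have hfact : b - 1 = b * (1 - 1 / b) := by field_simp
  have heq : (b - 1) ^ (1 - s) = b ^ (1 - s) * (1 - 1 / b) ^ (1 - s) := by
    rw [hfact, Real.mul_rpow hb0.le (by linarith [ht2] : (0:ℝ) ≤ 1 - 1/b)]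
  have hbpow : b ^ (1 - s) * (1 / b) = b ^ (-s) := by
    rw [one_div, ← Real.rpow_neg_one b, ← Real.rpow_add hb0]
    ring_nf
  have hbpos : (0 : ℝ) < b ^ (1 - s) := Real.rpow_pos_of_pos hb0 _
  calc (s - 1) * b ^ (-s) = b ^ (1 - s) * (1 + (s - 1) * (1 / b)) - b ^ (1 - s) := by
        rw [← hbpow]; ring
    _ ≤ b ^ (1 - s) * (1 - 1 / b) ^ (1 - s) - b ^ (1 - s) := by
        have := mul_le_mul_of_nonneg_left hmain hbpos.le
        linarith
    _ = (b - 1) ^ (1 - s) - b ^ (1 - s) := by rw [heq]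

/-- Tail sum bound: for `s > 1` and `m ≥ 1`, `∑_{j≥0} (m+1+j)^{-s} ≤ m^{1-s}/(s-1)`. -/
lemma tail_sum_le (s : ℝ) (hs : 1 < s) (m : ℕ) (hm : 1 ≤ m) :
    ∑' j : ℕ, ((m + 1 + j : ℕ) : ℝ) ^ (-s) ≤ (m : ℝ) ^ (1 - s) / (s - 1) := by
  set g : ℕ → ℝ := fun j => ((m + j : ℕ) : ℝ) ^ (1 - s) with hg
  have hganti : ∀ j, g (j + 1) ≤ g j := by
    intro j
    apply Real.rpow_le_rpow_of_nonpos (by positivity) (by push_cast; linarith) (by linarith)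
  -- telescoping sum
  have hg0 : Filter.Tendsto g Filter.atTop (nhds 0) := by
    have h1 : Filter.Tendsto (fun j : ℕ => ((m + j : ℕ) : ℝ)) Filter.atTop Filter.atTop := by
      apply Filter.tendsto_atTop_mono (fun j => by push_cast; linarith [Nat.cast_nonneg (α := ℝ) m])
        tendsto_natCast_atTop_atTop
    have h2 := (tendsto_rpow_neg_atTop (by linarith : (0:ℝ) < s - 1)).comp h1
    simpa [hg, neg_sub, Function.comp_def] using h2
  have htel : HasSum (fun j => g j - g (j + 1)) (g 0) := by
    rw [hasSum_iff_tendsto_nat_of_nonneg (fun j => by linarith [hganti j])]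
    have : ∀ n : ℕ, ∑ i ∈ Finset.range n, (g i - g (i + 1)) = g 0 - g n := by
      intro n; exact Finset.sum_range_sub' g n
    simp_rw [this]
    simpa using (tendsto_const_nhds (x := g 0)).sub hg0
  -- termwise bound
  have hterm : ∀ j : ℕ, ((m + 1 + j : ℕ) : ℝ) ^ (-s) ≤ (g j - g (j + 1)) / (s - 1) := by
    intro j
    have hidx : m + 1 + j = m + (j + 1) := by omega
    rw [hidx]
    have hb : (2 : ℝ) ≤ ((m + (j + 1) : ℕ) : ℝ) := by
      have h1 : (1 : ℝ) ≤ (m : ℝ) := by exact_mod_cast hm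
      push_cast; linarith [Nat.cast_nonneg (α := ℝ) j]
    have := tail_step s hs ((m + (j + 1) : ℕ) : ℝ) hb
    have hbm1 : ((m + (j + 1) : ℕ) : ℝ) - 1 = ((m + j : ℕ) : ℝ) := by push_cast; ring
    rw [le_div_iff₀ (by linarith : (0:ℝ) < s - 1)]
    rw [hbm1] at this
    simp only [hg]
    linarith
  -- summability of LHS
  have hsum : Summable (fun j : ℕ => ((m + 1 + j : ℕ) : ℝ) ^ (-s)) := by
    have h0 : Summable (fun n : ℕ => (n : ℝ) ^ (-s)) :=
      (Real.summable_nat_rpow).2 (by linarith)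
    have h1 := (summable_nat_add_iff (m + 1)).2 h0
    apply h1.congr
    intro j
    congr 2
    push_cast; ring
  have hsum2 : Summable (fun j => (g j - g (j + 1)) / (s - 1)) :=
    (htel.summable).div_const _
  calc ∑' j : ℕ, ((m + 1 + j : ℕ) : ℝ) ^ (-s)
      ≤ ∑' j : ℕ, (g j - g (j + 1)) / (s - 1) := Summable.tsum_le_tsum hterm hsum hsum2
    _ = g 0 / (s - 1) := (htel.div_const _).tsum_eq
    _ = (m : ℝ) ^ (1 - s) / (s - 1) := by simp [hg]

/-- Rate computation for the truncated-series estimator with weights `α_i = i^{−ξ}` and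
bounds `c_i = i^{−ν}`: with the cutoff `m = ⌈n^{1/(2ν−1)}⌉`, the variance term
`(1/n) Σ_{i=1}^m i^{−2ξ}` plus the squared-bias term `(Σ_{i=m+1}^∞ i^{−(ν+ξ)})²` is of
order `n^{−1+(1−2ξ)/(2ν−1)}`. -/
theorem truncated_series_rate
    (ξ ν : ℝ) (hξ0 : 0 < ξ) (hξ : ξ < 1/2) (hν : 0 < ν) (hνξ : 1 < ν + ξ) :
    ∃ C : ℝ, ∀ n : ℕ, 2 ≤ n →
      (1 / (n : ℝ)) * (∑ i ∈ Finset.Icc 1 ⌈(n : ℝ) ^ (1 / (2 * ν - 1))⌉₊, (i : ℝ) ^ (-(2 * ξ)))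
        + (∑' j : ℕ, ((⌈(n : ℝ) ^ (1 / (2 * ν - 1))⌉₊ + 1 + j : ℕ) : ℝ) ^ (-(ν + ξ)))^2
      ≤ C * (n : ℝ) ^ (-1 + (1 - 2 * ξ) / (2 * ν - 1)) := by
  have h2ν : (0 : ℝ) < 2 * ν - 1 := by linarith
  set r : ℝ := 1 / (2 * ν - 1) with hr
  have hr0 : 0 < r := by positivity
  refine ⟨2 / (1 - 2 * ξ) + (1 / (ν + ξ - 1)) ^ 2, ?_⟩
  intro n hn
  have hn1 : (1 : ℝ) ≤ (n : ℝ) := by exact_mod_cast Nat.one_le_of_lt hn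
  have hn0 : (0 : ℝ) < (n : ℝ) := by linarith
  set x : ℝ := (n : ℝ) ^ r with hx
  have hx1 : 1 ≤ x := Real.one_le_rpow hn1 hr0.le
  have hx0 : 0 < x := by linarith
  set m : ℕ := ⌈x⌉₊ with hmdef
  have hm1 : 1 ≤ m := Nat.one_le_iff_ne_zero.2 (by
    intro h
    have := Nat.le_ceil x
    rw [hmdef] at h
    rw [h] at this
    simp at this
    linarith)
  have hxm : x ≤ (m : ℝ) := Nat.le_ceil x
  have hm2x : (m : ℝ) ≤ 2 * x := by
    have := Nat.ceil_lt_add_one (by linarith : (0:ℝ) ≤ x)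
    rw [← hmdef] at this
    linarith
  set y : ℝ := (n : ℝ) ^ (-1 + (1 - 2 * ξ) / (2 * ν - 1)) with hy
  -- variance term
  have hvar : (1 / (n : ℝ)) * (∑ i ∈ Finset.Icc 1 m, (i : ℝ) ^ (-(2 * ξ)))
      ≤ (2 / (1 - 2 * ξ)) * y := by
    have h1 := head_sum_le (2 * ξ) (by linarith) (by linarith) m
    have h2 : (m : ℝ) ^ (1 - 2 * ξ) ≤ 2 * x ^ (1 - 2 * ξ) := by
      calc (m : ℝ) ^ (1 - 2 * ξ) ≤ (2 * x) ^ (1 - 2 * ξ) :=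
            Real.rpow_le_rpow (by positivity) hm2x (by linarith)
        _ = 2 ^ (1 - 2 * ξ) * x ^ (1 - 2 * ξ) := Real.mul_rpow (by norm_num) hx0.le
        _ ≤ 2 * x ^ (1 - 2 * ξ) := by
            have : (2:ℝ) ^ (1 - 2*ξ) ≤ 2 ^ (1:ℝ) :=
              Real.rpow_le_rpow_of_exponent_le (by norm_num) (by linarith)
            rw [Real.rpow_one] at this
            exact mul_le_mul_of_nonneg_right this (Real.rpow_nonneg hx0.le _)
    have hxy : (1 / (n : ℝ)) * x ^ (1 - 2 * ξ) = y := by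
      rw [hx, ← Real.rpow_mul hn0.le, hy, Real.rpow_add hn0, one_div,
        ← Real.rpow_neg_one (n : ℝ)]
      congr 1
      rw [hr]; ring
    calc (1 / (n : ℝ)) * (∑ i ∈ Finset.Icc 1 m, (i : ℝ) ^ (-(2 * ξ)))
        ≤ (1 / (n : ℝ)) * ((m : ℝ) ^ (1 - 2 * ξ) / (1 - 2 * ξ)) := by
          apply mul_le_mul_of_nonneg_left h1 (by positivity)
      _ ≤ (1 / (n : ℝ)) * ((2 * x ^ (1 - 2 * ξ)) / (1 - 2 * ξ)) := by
          apply mul_le_mul_of_nonneg_left _ (by positivity)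
          apply div_le_div_of_nonneg_right h2 (by linarith)
      _ = (2 / (1 - 2 * ξ)) * ((1 / (n : ℝ)) * x ^ (1 - 2 * ξ)) := by ring
      _ = (2 / (1 - 2 * ξ)) * y := by rw [hxy]
  -- bias term
  have hbias : (∑' j : ℕ, ((m + 1 + j : ℕ) : ℝ) ^ (-(ν + ξ)))^2
      ≤ (1 / (ν + ξ - 1)) ^ 2 * y := by
    have h1 := tail_sum_le (ν + ξ) hνξ m hm1
    have h2 : (m : ℝ) ^ (1 - (ν + ξ)) ≤ x ^ (1 - (ν + ξ)) :=
      Real.rpow_le_rpow_of_nonpos hx0 hxm (by linarith)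
    have htnn : 0 ≤ ∑' j : ℕ, ((m + 1 + j : ℕ) : ℝ) ^ (-(ν + ξ)) :=
      tsum_nonneg (fun j => Real.rpow_nonneg (Nat.cast_nonneg _) _)
    have hT : ∑' j : ℕ, ((m + 1 + j : ℕ) : ℝ) ^ (-(ν + ξ))
        ≤ x ^ (1 - (ν + ξ)) / (ν + ξ - 1) := by
      calc ∑' j : ℕ, ((m + 1 + j : ℕ) : ℝ) ^ (-(ν + ξ))
          ≤ (m : ℝ) ^ (1 - (ν + ξ)) / (ν + ξ - 1) := h1
        _ ≤ x ^ (1 - (ν + ξ)) / (ν + ξ - 1) :=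
            div_le_div_of_nonneg_right h2 (by linarith)
    have hsq : (∑' j : ℕ, ((m + 1 + j : ℕ) : ℝ) ^ (-(ν + ξ)))^2
        ≤ (x ^ (1 - (ν + ξ)) / (ν + ξ - 1)) ^ 2 :=
      pow_le_pow_left₀ htnn hT 2
    have hxy2 : (x ^ (1 - (ν + ξ))) ^ 2 = y := by
      rw [hx, ← Real.rpow_mul hn0.le, ← Real.rpow_natCast ((n:ℝ) ^ (r * (1 - (ν + ξ)))) 2,
        ← Real.rpow_mul hn0.le, hy]
      congr 1
      rw [hr]
      field_simp
      ring
    calc (∑' j : ℕ, ((m + 1 + j : ℕ) : ℝ) ^ (-(ν + ξ)))^2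
        ≤ (x ^ (1 - (ν + ξ)) / (ν + ξ - 1)) ^ 2 := hsq
      _ = (1 / (ν + ξ - 1)) ^ 2 * (x ^ (1 - (ν + ξ))) ^ 2 := by ring
      _ = (1 / (ν + ξ - 1)) ^ 2 * y := by rw [hxy2]
  calc (1 / (n : ℝ)) * (∑ i ∈ Finset.Icc 1 m, (i : ℝ) ^ (-(2 * ξ)))
        + (∑' j : ℕ, ((m + 1 + j : ℕ) : ℝ) ^ (-(ν + ξ)))^2
      ≤ (2 / (1 - 2 * ξ)) * y + (1 / (ν + ξ - 1)) ^ 2 * y := add_le_add hvar hbias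
    _ = (2 / (1 - 2 * ξ) + (1 / (ν + ξ - 1)) ^ 2) * y := by ring
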